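/- Let G be a finite directed multigraph with d^+(v) = d^-(v) ≥ 1 for every v, and suppose there is a vertex v0 and edges (a 'red' in-tree) assigning to each v ≠ v0 one out-edge, forming an in-arborescence toward v0. Consider any walk starting at v0 that at each vertex v leaves along an unused out-edge, preferring non-tree edges and using the tree edge of v only when all other out-edges of v are used, and never repeating an edge. Then this walk can only terminate at v0, and when it terminates at v0 it has used every edge of G. -/
import Mathlib


/-- A walk in a directed multigraph given by `tail`/`head` maps, as a list of edges. -/
def IsWalk {V E : Type} (tail head : E → V) : List E → V → V → Prop
  | [], a, b => a = b
  | e :: es, a, b => tail e = a ∧ IsWalk tail head es (head e) b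

/-- A trail: a walk using no edge twice. -/
def IsTrail {V E : Type} (tail head : E → V) (l : List E) (a b : V) : Prop :=
  IsWalk tail head l a b ∧ l.Nodup

/-- Out-degree of a vertex. -/
noncomputable def outDeg {V E : Type} (tail : E → V) (v : V) : ℕ := Nat.card {e // tail e = v}

/-- In-degree of a vertex. -/
noncomputable def inDeg {V E : Type} (head : E → V) (v : V) : ℕ := Nat.card {e // head e = v}

/-- Adjacency in the underlying undirected graph. -/
def weakAdj {V E : Type} (tail head : E → V) (u v : V) : Prop :=
  ∃ e, (tail e = u ∧ head e = v) ∨ (tail e = v ∧ head e = u)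

/-- Directed adjacency. -/
def dirAdj {V E : Type} (tail head : E → V) (u v : V) : Prop :=
  ∃ e, tail e = u ∧ head e = v

open Classical in
/-- Counting balance along a walk. -/
lemma walk_balance {V E : Type} (tail head : E → V) :
    ∀ (l : List E) (a b : V), IsWalk tail head l a b → ∀ v : V,
      l.countP (fun e => decide (tail e = v)) + (if v = b then 1 else 0)
        = l.countP (fun e => decide (head e = v)) + (if v = a then 1 else 0) := by
  intro l
  induction l with
  | nil =>
    intro a b h v
    cases h
    simp
  | cons e es ih =>
    intro a b h v
    obtain ⟨he, hw⟩ := h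
    have := ih (head e) b hw v
    simp only [List.countP_cons]
    subst he
    by_cases h1 : tail e = v <;> by_cases h2 : head e = v <;>
      simp_all [eq_comm] <;> omega

open Classical in
/-- countP of a nodup list is at most the total count. -/
lemma countP_le_card {E : Type} [Fintype E] (l : List E) (hl : l.Nodup)
    (p : E → Prop) :
    l.countP (fun e => decide (p e)) ≤ Fintype.card {e // p e} := by
  classical
  rw [List.countP_eq_length_filter]
  have hnd : (l.filter (fun e => decide (p e))).Nodup := hl.filter _
  rw [← List.toFinset_card_of_nodup hnd, Fintype.card_subtype]
  apply Finset.card_le_card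
  intro x hx
  simp only [List.mem_toFinset, List.mem_filter, decide_eq_true_eq] at hx
  simp [hx.2]

open Classical in
lemma countP_eq_card {E : Type} [Fintype E] (l : List E) (hl : l.Nodup)
    (p : E → Prop) (h : ∀ e, p e → e ∈ l) :
    l.countP (fun e => decide (p e)) = Fintype.card {e // p e} := by
  classical
  rw [List.countP_eq_length_filter]
  have hnd : (l.filter (fun e => decide (p e))).Nodup := hl.filter _
  rw [← List.toFinset_card_of_nodup hnd, Fintype.card_subtype]
  congr 1
  ext x
  simp only [List.mem_toFinset, List.mem_filter, decide_eq_true_eq,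
    Finset.mem_filter, Finset.mem_univ, true_and]
  exact ⟨fun h => h.2, fun hx => ⟨h x hx, hx⟩⟩

open Classical in
lemma exists_unused {E : Type} [Fintype E] (l : List E) (hl : l.Nodup)
    (p : E → Prop)
    (h : l.countP (fun e => decide (p e)) < Fintype.card {e // p e}) :
    ∃ e, p e ∧ e ∉ l := by
  by_contra hc
  push_neg at hc
  have := countP_eq_card l hl p (fun e he => by
    by_contra h'; exact h' (hc e he))
  omega

theorem stmt9 {V E : Type} [Fintype V] [Fintype E] (tail head : E → V) (v0 : V)
    (hbal : ∀ v, outDeg tail v = inDeg head v)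
    (hpos : ∀ v, 1 ≤ outDeg tail v)
    (red : Set E)
    (hred1 : ∀ v, v ≠ v0 → Nat.card {e // e ∈ red ∧ tail e = v} = 1)
    (hred0 : Nat.card {e // e ∈ red ∧ tail e = v0} = 0)
    (hredreach : ∀ v : V,
      Relation.ReflTransGen (fun x y => ∃ e ∈ red, tail e = x ∧ head e = y) v v0)
    (l : List E) (u : V) (hT : IsTrail tail head l v0 u)
    (hgreedy : ∀ (l₁ : List E) (e : E) (l₂ : List E), l = l₁ ++ e :: l₂ → e ∈ red →
      ∀ e', tail e' = tail e → e' ≠ e → e' ∈ l₁)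
    (hmax : ∀ e, tail e = u → e ∈ l) :
    u = v0 ∧ ∀ e, e ∈ l := by
  classical
  obtain ⟨hw, hnd⟩ := hT
  -- degree as Fintype.card
  have hout : ∀ v, outDeg tail v = Fintype.card {e // tail e = v} := fun v =>
    Nat.card_eq_fintype_card
  have hin : ∀ v, inDeg head v = Fintype.card {e // head e = v} := fun v =>
    Nat.card_eq_fintype_card
  have hbalance := walk_balance tail head l v0 u hw
  -- Step 1 : u = v0
  have huv0 : u = v0 := by
    by_contra hne
    have h1 := hbalance u
    simp only [if_pos rfl, if_neg hne, if_true] at h1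
    have h2 : l.countP (fun e => decide (tail e = u)) = Fintype.card {e // tail e = u} :=
      countP_eq_card l hnd _ hmax
    have h3 : l.countP (fun e => decide (head e = u)) ≤ Fintype.card {e // head e = u} :=
      countP_le_card l hnd _
    have h4 := hbal u
    rw [hout, hin] at h4
    omega
  subst huv0
  refine ⟨rfl, ?_⟩
  -- balance at every vertex, circuit case
  have hcirc : ∀ v, l.countP (fun e => decide (tail e = v))
      = l.countP (fun e => decide (head e = v)) := by
    intro v
    have := hbalance v
    split_ifs at this <;> omega
  -- if the red edge out of v is used, then all out-edges of v are used
  have hredused : ∀ e, e ∈ red → e ∈ l → ∀ e', tail e' = tail e → e' ∈ l := by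
    intro e he hel e' hte
    obtain ⟨l₁, l₂, rfl⟩ := List.append_of_mem hel
    by_cases hee : e' = e
    · subst hee; exact hel
    · have := hgreedy l₁ e l₂ rfl he e' hte hee
      simp [this]
  -- S: vertices with an unused out-edge
  set S : V → Prop := fun v => ∃ e, tail e = v ∧ e ∉ l with hS
  have hv0S : ¬ S u := by
    rintro ⟨e, hte, hel⟩
    exact hel (hmax e hte)
  -- propagation along red edges
  have hstep : ∀ a b : V, (∃ e ∈ red, tail e = a ∧ head e = b) → S a → S b := by
    rintro a b ⟨e, he, hta, hhb⟩ ⟨f, htf, hfl⟩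
    -- e is not used: otherwise all out-edges of a used, contradicting f
    have heunused : e ∉ l := fun hel =>
      hfl (hredused e he hel f (htf.trans hta.symm))
    -- used in-degree at b is strictly less than inDeg b
    have h1 : l.countP (fun e' => decide (head e' = b)) < Fintype.card {e' // head e' = b} := by
      rcases lt_or_eq_of_le (countP_le_card l hnd (fun e' => head e' = b)) with h | h
      · exact h
      · exfalso
        -- then all in-edges of b used, but e is an unused in-edge of b
        have : l.countP (fun e' => decide (head e' = b)) = Fintype.card {e' // head e' = b} := h
        -- show e ∈ l : contradiction via exists_unused complement
        have hsub : ∀ e', head e' = b → e' ∈ l := by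
          by_contra hc
          push_neg at hc
          obtain ⟨e', he', hel'⟩ := hc
          have := List.countP_eq_length_filter (l := l)
            (p := fun x => decide (head x = b))
          -- count argument: counting on l vs. full type
          have hlt : l.countP (fun x => decide (head x = b))
              < Fintype.card {x // head x = b} := by
            rw [List.countP_eq_length_filter]
            have hnd' : (l.filter (fun x => decide (head x = b))).Nodup := hnd.filter _
            rw [← List.toFinset_card_of_nodup hnd', Fintype.card_subtype]
            apply Finset.card_lt_card
            constructor
            · intro x hx
              simp only [List.mem_toFinset, List.mem_filter, decide_eq_true_eq] at hx
              simp [hx.2]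
            · intro hsub'
              have := hsub' (by simp [he'] :
                e' ∈ Finset.univ.filter fun x => head x = b)
              simp only [List.mem_toFinset, List.mem_filter] at this
              exact hel' this.1
          omega
        exact heunused (hsub e hhb)
    -- hence used out-degree at b < outDeg b
    have h2 : l.countP (fun e' => decide (tail e' = b)) < Fintype.card {e' // tail e' = b} := by
      have := hcirc b
      have h4 := hbal b
      rw [hout, hin] at h4
      omega
    obtain ⟨g, hg, hgl⟩ := exists_unused l hnd (fun e' => tail e' = b) h2
    exact ⟨g, hg, hgl⟩
  -- conclude: every edge is used
  intro e
  by_contra hel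
  have hSe : S (tail e) := ⟨e, rfl, hel⟩
  have htran : ∀ a, Relation.ReflTransGen
      (fun x y => ∃ e ∈ red, tail e = x ∧ head e = y) a u → S a → S u := by
    intro a h
    refine Relation.ReflTransGen.head_induction_on h id ?_
    intro x y hxy _ ih hx
    exact ih (hstep x y hxy hx)
  exact hv0S (htran (tail e) (hredreach (tail e)) hSe)
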